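/- Let m ≥ 1 and let t₁, t₂, t₃ ∈ ℂ with |t₁|, |t₂|, |t₃| < 1. Then exp( ∑_{p≥1} (1/p)·( t₁^{mp} + t₂^{mp} + t₃^{mp} + (t₁t₂t₃)^p − (t₁t₂t₃)^{mp} ) ) = (1 − (t₁t₂t₃)^m) / [(1 − t₁t₂t₃)(1 − t₁^m)(1 − t₂^m)(1 − t₃^m)], the series on the left converging absolutely. In plethystic language: the plethystic logarithm of the refined Hilbert series of ℂ³/(ℤ_m × ℤ_m) is the polynomial t₁^m + t₂^m + t₃^m + t₁t₂t₃ − (t₁t₂t₃)^m, so this orbifold is a complete intersection. -/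

import Mathlib

open Complex

lemma plog_aux {z : ℂ} (hz : ‖z‖ < 1) :
    HasSum (fun p : ℕ => (1 / (p + 1 : ℂ)) * z ^ (p + 1)) (-Complex.log (1 - z)) := by
  have h := hasSum_taylorSeries_neg_log (z := z) (by simpa using hz)
  have h2 := (hasSum_nat_add_iff' (f := fun n : ℕ => z ^ n / n) 1).mpr h
  simp only [Finset.range_one, Finset.sum_singleton, pow_zero, Nat.cast_zero, div_zero,
    sub_zero] at h2
  convert h2 using 2 with p
  · rfl
  push_cast
  ring

lemma one_sub_ne {z : ℂ} (hz : ‖z‖ < 1) : 1 - z ≠ 0 := by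
  intro h
  have : z = 1 := by linear_combination -h
  simp [this] at hz

/-- The plethystic logarithm of the refined Hilbert series of `ℂ³/(ℤ_m × ℤ_m)` is
the polynomial `t₁^m + t₂^m + t₃^m + t₁t₂t₃ - (t₁t₂t₃)^m`: for `|tᵢ| < 1`, the
series `∑_{p≥1} (1/p)(t₁^{mp} + t₂^{mp} + t₃^{mp} + (t₁t₂t₃)^p - (t₁t₂t₃)^{mp})`
converges absolutely and its exponential equals
`(1 - (t₁t₂t₃)^m)/((1 - t₁t₂t₃)(1 - t₁^m)(1 - t₂^m)(1 - t₃^m))`. -/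
theorem plethystic_exp_Zm_Zm (m : ℕ) (hm : 1 ≤ m) (t₁ t₂ t₃ : ℂ)
    (h₁ : ‖t₁‖ < 1) (h₂ : ‖t₂‖ < 1) (h₃ : ‖t₃‖ < 1) :
    Summable (fun p : ℕ => (1 / (p + 1 : ℂ)) *
      (t₁ ^ (m * (p + 1)) + t₂ ^ (m * (p + 1)) + t₃ ^ (m * (p + 1)) +
        (t₁ * t₂ * t₃) ^ (p + 1) - (t₁ * t₂ * t₃) ^ (m * (p + 1)))) ∧
    Complex.exp (∑' p : ℕ, (1 / (p + 1 : ℂ)) *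
      (t₁ ^ (m * (p + 1)) + t₂ ^ (m * (p + 1)) + t₃ ^ (m * (p + 1)) +
        (t₁ * t₂ * t₃) ^ (p + 1) - (t₁ * t₂ * t₃) ^ (m * (p + 1))))
    = (1 - (t₁ * t₂ * t₃) ^ m) /
        ((1 - t₁ * t₂ * t₃) * (1 - t₁ ^ m) * (1 - t₂ ^ m) * (1 - t₃ ^ m)) := by
  have habs : ∀ t : ℂ, ‖t‖ < 1 → ‖t ^ m‖ < 1 := fun t ht => by
    rw [norm_pow]
    exact pow_lt_one₀ (by positivity) ht (by omega)
  have hu : ‖t₁ * t₂ * t₃‖ < 1 := by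
    simp only [norm_mul]
    calc ‖t₁‖ * ‖t₂‖ * ‖t₃‖
        ≤ 1 * 1 * ‖t₃‖ := by
          gcongr <;> first | exact h₁.le | exact h₂.le
      _ < 1 := by simpa using h₃
  have H1 := plog_aux (habs t₁ h₁)
  have H2 := plog_aux (habs t₂ h₂)
  have H3 := plog_aux (habs t₃ h₃)
  have H4 := plog_aux hu
  have H5 := plog_aux (habs (t₁ * t₂ * t₃) hu)
  have Htot := ((((H1.add H2).add H3).add H4).sub H5)
  have hfun : (fun p : ℕ => (1 / (p + 1 : ℂ)) *
      (t₁ ^ (m * (p + 1)) + t₂ ^ (m * (p + 1)) + t₃ ^ (m * (p + 1)) +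
        (t₁ * t₂ * t₃) ^ (p + 1) - (t₁ * t₂ * t₃) ^ (m * (p + 1)))) =
      (fun p : ℕ =>
        (1 / (p + 1 : ℂ)) * (t₁ ^ m) ^ (p + 1) + (1 / (p + 1 : ℂ)) * (t₂ ^ m) ^ (p + 1) +
          (1 / (p + 1 : ℂ)) * (t₃ ^ m) ^ (p + 1) + (1 / (p + 1 : ℂ)) * (t₁ * t₂ * t₃) ^ (p + 1) -
          (1 / (p + 1 : ℂ)) * ((t₁ * t₂ * t₃) ^ m) ^ (p + 1)) := by
    funext p
    simp only [← pow_mul]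
    ring
  rw [hfun] at *
  refine ⟨Htot.summable, ?_⟩
  rw [Htot.tsum_eq]
  have n1 := one_sub_ne (habs t₁ h₁)
  have n2 := one_sub_ne (habs t₂ h₂)
  have n3 := one_sub_ne (habs t₃ h₃)
  have n4 := one_sub_ne hu
  have n5 := one_sub_ne (habs (t₁ * t₂ * t₃) hu)
  rw [show -Complex.log (1 - t₁ ^ m) + -Complex.log (1 - t₂ ^ m) + -Complex.log (1 - t₃ ^ m) +
      -Complex.log (1 - t₁ * t₂ * t₃) - -Complex.log (1 - (t₁ * t₂ * t₃) ^ m) =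
      Complex.log (1 - (t₁ * t₂ * t₃) ^ m) + (-(Complex.log (1 - t₁ ^ m) +
        Complex.log (1 - t₂ ^ m) + Complex.log (1 - t₃ ^ m) +
        Complex.log (1 - t₁ * t₂ * t₃))) by ring]
  rw [Complex.exp_add, Complex.exp_neg, Complex.exp_add, Complex.exp_add, Complex.exp_add,
    Complex.exp_log n5, Complex.exp_log n1, Complex.exp_log n2, Complex.exp_log n3,
    Complex.exp_log n4]
  rw [show (1 - t₁ * t₂ * t₃) * (1 - t₁ ^ m) * (1 - t₂ ^ m) * (1 - t₃ ^ m) =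
      (1 - t₁ ^ m) * (1 - t₂ ^ m) * (1 - t₃ ^ m) * (1 - t₁ * t₂ * t₃) by ring]
  rw [div_eq_mul_inv]
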